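/- For u > 0, if (a_n) is a bounded nonnegative sequence that does NOT converge to 0 with density 1, then limsup_n n^{-u} Σ_{i=1}^{n-1} a_i i^{u-1} > 0. -/

import Mathlib

open scoped BigOperators
open Filter

/-- A set `E ⊆ ℕ` has natural density 0 if `(1/n)·|E ∩ {0,…,n-1}| → 0`. -/
def HasDensityZero (E : Set ℕ) : Prop :=
  Tendsto (fun n : ℕ =>
    (∑ k ∈ Finset.range n, Set.indicator E (fun _ => (1 : ℝ)) k) / n) atTop (nhds 0)

/-- `a_n → 0` with density 1 iff there is a density-0 set `E` with `a_n → 0` along `n ∉ E`. -/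
def TendstoZeroDensityOne (a : ℕ → ℝ) : Prop :=
  ∃ E : Set ℕ, HasDensityZero E ∧ Tendsto a (atTop ⊓ Filter.principal Eᶜ) (nhds 0)

/-- For `u > 0`, if `(a_n)` is a bounded nonnegative sequence that does NOT converge to 0
with density 1, then `limsup_n n^{-u} Σ_{i=1}^{n-1} a_i i^{u-1} > 0`. -/

private lemma bern_step {u : ℝ} (hu : 0 < u) (hu1 : u ≤ 1) {x : ℝ} (hx : 1 ≤ x) :
    u * x ^ (u - 1) ≤ x ^ u - (x - 1) ^ u := by
  have hx0 : (0 : ℝ) < x := lt_of_lt_of_le one_pos hx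
  have h1x : 1 / x ≤ 1 := by
    rw [div_le_one hx0]; exact hx
  have hs : (-1 : ℝ) ≤ -(1 / x) := by
    have : 0 < 1 / x := by positivity
    linarith
  have key : (1 + -(1/x)) ^ u ≤ 1 + u * -(1/x) :=
    rpow_one_add_le_one_add_mul_self hs hu.le hu1
  have hfac : x - 1 = x * (1 + -(1/x)) := by
    field_simp
    ring
  have hmul : (x - 1) ^ u = x ^ u * (1 + -(1/x)) ^ u := by
    rw [hfac, Real.mul_rpow hx0.le (by linarith)]
  have hxu : (0:ℝ) ≤ x ^ u := Real.rpow_nonneg hx0.le u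
  have h2 : (x - 1) ^ u ≤ x ^ u * (1 + u * -(1/x)) := by
    rw [hmul]; exact mul_le_mul_of_nonneg_left key hxu
  have h3 : x ^ u * (1 + u * -(1/x)) = x ^ u - u * (x ^ u / x) := by
    field_simp; ring
  have h4 : x ^ u / x = x ^ (u - 1) := by
    rw [Real.rpow_sub hx0, Real.rpow_one]
  rw [h3, h4] at h2
  linarith

private lemma sum_rpow_bound {u : ℝ} (hu : 0 < u) (n : ℕ) :
    ∑ i ∈ Finset.Icc 1 n, (i : ℝ) ^ (u - 1) ≤ max 1 (1/u) * ((n : ℝ) + 1) ^ u := by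
  have hn1 : (0:ℝ) ≤ (n:ℝ) + 1 := by positivity
  rcases le_or_gt 1 u with h1u | h1u
  · -- u ≥ 1 : each term ≤ (n+1)^(u-1)
    have : ∑ i ∈ Finset.Icc 1 n, (i : ℝ) ^ (u - 1) ≤
        ∑ i ∈ Finset.Icc 1 n, ((n:ℝ)+1) ^ (u - 1) := by
      apply Finset.sum_le_sum
      intro i hi
      have hi' : (i:ℝ) ≤ (n:ℝ) + 1 := by
        have h2 := (Finset.mem_Icc.mp hi).2
        have : (i:ℝ) ≤ (n:ℝ) := by exact_mod_cast h2
        linarith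
      exact Real.rpow_le_rpow (by positivity) hi' (by linarith)
    rw [Finset.sum_const] at this
    have hcard : (Finset.Icc 1 n).card = n := by simp
    rw [hcard] at this
    calc ∑ i ∈ Finset.Icc 1 n, (i : ℝ) ^ (u - 1) ≤ n • ((n:ℝ)+1) ^ (u-1) := this
      _ = (n:ℝ) * ((n:ℝ)+1) ^ (u-1) := by rw [nsmul_eq_mul]
      _ ≤ ((n:ℝ)+1) * ((n:ℝ)+1) ^ (u-1) := by
          apply mul_le_mul_of_nonneg_right (by linarith) (Real.rpow_nonneg hn1 _)
      _ = ((n:ℝ)+1) ^ u := by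
          rw [← Real.rpow_one_add' hn1 (by linarith : (1:ℝ) + (u-1) ≠ 0)]
          ring_nf
      _ ≤ max 1 (1/u) * ((n : ℝ) + 1) ^ u := by
          nth_rewrite 1 [← one_mul (((n:ℝ)+1) ^ u)]
          exact mul_le_mul_of_nonneg_right (le_max_left _ _) (Real.rpow_nonneg hn1 _)
  · -- u < 1 : telescoping
    have key : ∀ m : ℕ, ∑ i ∈ Finset.Icc 1 m, (i : ℝ) ^ (u - 1) ≤ (m:ℝ) ^ u / u := by
      intro m
      induction m with
      | zero => simp [Real.zero_rpow hu.ne']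
      | succ m ih =>
        rw [Finset.sum_Icc_succ_top (by omega : 1 ≤ m + 1)]
        have hb := bern_step hu h1u.le (x := (m:ℝ) + 1) (by simp)
        have hcast : ((m+1 : ℕ) : ℝ) = (m:ℝ) + 1 := by push_cast; ring
        have hsub : (m:ℝ) + 1 - 1 = (m:ℝ) := by ring
        rw [hsub] at hb
        rw [hcast]
        have : ((m:ℝ)+1) ^ (u-1) ≤ (((m:ℝ)+1) ^ u - (m:ℝ) ^ u) / u := by
          rw [le_div_iff₀ hu]; linarith
        calc (∑ i ∈ Finset.Icc 1 m, (i : ℝ) ^ (u - 1)) + ((m:ℝ)+1) ^ (u-1)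
            ≤ (m:ℝ)^u/u + (((m:ℝ)+1) ^ u - (m:ℝ) ^ u) / u := by
              exact add_le_add ih this
          _ = ((m:ℝ)+1) ^ u / u := by field_simp; ring
    calc ∑ i ∈ Finset.Icc 1 n, (i : ℝ) ^ (u - 1) ≤ (n:ℝ) ^ u / u := key n
      _ = (1/u) * (n:ℝ)^u := by ring
      _ ≤ max 1 (1/u) * ((n : ℝ) + 1) ^ u := by
          apply mul_le_mul (le_max_right _ _)
            (Real.rpow_le_rpow (by positivity) (by linarith) hu.le)
            (Real.rpow_nonneg (by positivity) _) (by positivity)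

private lemma density_zero_of_S_tendsto {u : ℝ} (hu : 0 < u) (a : ℕ → ℝ)
    (ha : ∀ n, 0 ≤ a n)
    (hS : Tendsto (fun n : ℕ =>
      (n:ℝ)^(-u) * ∑ i ∈ Finset.Icc 1 (n-1), a i * (i:ℝ)^(u-1)) atTop (nhds 0))
    {ε : ℝ} (hε : 0 < ε) :
    HasDensityZero {n | ε ≤ a n} := by
  set E : Set ℕ := {n | ε ≤ a n} with hE
  set I : ℕ → ℝ := Set.indicator E (fun _ => (1:ℝ)) with hIdef
  have hI0 : ∀ k, 0 ≤ I k := by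
    intro k; by_cases hk : k ∈ E <;> simp [hIdef, Set.indicator, hk]
  have hI1 : ∀ k, I k ≤ 1 := by
    intro k; by_cases hk : k ∈ E <;> simp [hIdef, Set.indicator, hk]
  set c : ℝ := min 1 ((2:ℝ) ^ (u-1)) with hcdef
  have hc : 0 < c := lt_min one_pos (Real.rpow_pos_of_pos two_pos _)
  -- Block bound
  have hblock : ∀ δ : ℝ, 0 < δ → ∃ N : ℕ, 1 ≤ N ∧
      ∀ m, N ≤ m → (∑ i ∈ Finset.Ico m (2*m), I i) ≤ δ * m := by
    intro δ hδ
    set T : ℝ := (2:ℝ) ^ u with hTdef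
    have hT : 0 < T := Real.rpow_pos_of_pos two_pos u
    set δ' : ℝ := δ * ε * c / T with hδ'def
    have hδ'pos : 0 < δ' := by positivity
    have h2m : Tendsto (fun m : ℕ => (((2*m:ℕ)):ℝ)^(-u) *
        ∑ i ∈ Finset.Icc 1 (2*m-1), a i * (i:ℝ)^(u-1)) atTop (nhds 0) :=
      hS.comp (tendsto_atTop_atTop_of_monotone (fun x y hxy => by omega)
        (fun b => ⟨b, by omega⟩))
    have hev := h2m.eventually_lt_const hδ'pos
    obtain ⟨N₀, hN₀⟩ := Filter.eventually_atTop.mp hev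
    refine ⟨max N₀ 1, le_max_right _ _, ?_⟩
    intro m hm
    have hm1 : 1 ≤ m := le_trans (le_max_right _ _) hm
    have hm0 : (0:ℝ) < m := by exact_mod_cast hm1
    set P : ℝ := (m:ℝ)^(u-1) with hPdef
    have hP : 0 < P := Real.rpow_pos_of_pos hm0 _
    have hlow : ∀ i ∈ Finset.Ico m (2*m), c * P ≤ (i:ℝ)^(u-1) := by
      intro i hi
      obtain ⟨h1, h2⟩ := Finset.mem_Ico.mp hi
      have hmi : (m:ℝ) ≤ i := by exact_mod_cast h1
      have hi0 : (0:ℝ) < i := lt_of_lt_of_le hm0 hmi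
      have hi2m : (i:ℝ) ≤ 2*(m:ℝ) := by
        have : (i:ℝ) ≤ ((2*m:ℕ):ℝ) := by exact_mod_cast h2.le
        push_cast at this; linarith
      rcases le_or_gt 1 u with h1u | h1u
      · calc c * P ≤ 1 * P := mul_le_mul_of_nonneg_right (min_le_left _ _) hP.le
          _ = P := one_mul _
          _ ≤ (i:ℝ)^(u-1) := Real.rpow_le_rpow hm0.le hmi (by linarith)
      · calc c * P ≤ (2:ℝ)^(u-1) * P := mul_le_mul_of_nonneg_right (min_le_right _ _) hP.le
          _ = (2*(m:ℝ))^(u-1) := (Real.mul_rpow (by norm_num) hm0.le).symm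
          _ ≤ (i:ℝ)^(u-1) := Real.rpow_le_rpow_of_nonpos hi0 hi2m (by linarith)
    have hkey : (ε * (c * P)) * (∑ i ∈ Finset.Ico m (2*m), I i) ≤
        ∑ i ∈ Finset.Icc 1 (2*m-1), a i * (i:ℝ)^(u-1) := by
      rw [Finset.mul_sum]
      have step : ∀ i ∈ Finset.Ico m (2*m), ε * (c*P) * I i ≤ a i * (i:ℝ)^(u-1) := by
        intro i hi
        by_cases hiE : i ∈ E
        · have hone : I i = 1 := Set.indicator_of_mem hiE _
          have hεa : ε ≤ a i := hiE
          rw [hone, mul_one]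
          exact mul_le_mul hεa (hlow i hi) (by positivity) (ha i)
        · have hzero : I i = 0 := Set.indicator_of_notMem hiE _
          rw [hzero, mul_zero]
          have := ha i
          positivity
      calc ∑ i ∈ Finset.Ico m (2*m), ε*(c*P)*I i
          ≤ ∑ i ∈ Finset.Ico m (2*m), a i * (i:ℝ)^(u-1) := Finset.sum_le_sum step
        _ ≤ ∑ i ∈ Finset.Icc 1 (2*m-1), a i * (i:ℝ)^(u-1) := by
            apply Finset.sum_le_sum_of_subset_of_nonneg
            · intro x hx
              simp only [Finset.mem_Ico, Finset.mem_Icc] at *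
              omega
            · intro i _ _
              have := ha i
              positivity
    have hSig : ∑ i ∈ Finset.Icc 1 (2*m-1), a i * (i:ℝ)^(u-1) ≤ δ' * (2*(m:ℝ))^u := by
      have h := (hN₀ m (le_trans (le_max_left _ _) hm)).le
      have hcast : (((2*m:ℕ)):ℝ) = 2*(m:ℝ) := by push_cast; ring
      rw [hcast] at h
      have ht : (0:ℝ) < (2*(m:ℝ))^u := Real.rpow_pos_of_pos (by linarith) u
      have hneg : (2*(m:ℝ))^(-u) = ((2*(m:ℝ))^u)⁻¹ := Real.rpow_neg (by linarith) u
      rw [hneg] at h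
      have h2 := mul_le_mul_of_nonneg_left h ht.le
      have h3 : (2*(m:ℝ))^u * (((2*(m:ℝ))^u)⁻¹ *
          ∑ i ∈ Finset.Icc 1 (2*m-1), a i * (i:ℝ)^(u-1)) =
          ∑ i ∈ Finset.Icc 1 (2*m-1), a i * (i:ℝ)^(u-1) := by
        field_simp
      rw [h3] at h2
      linarith
    have hmu : (2*(m:ℝ))^u = T * (P * (m:ℝ)) := by
      rw [Real.mul_rpow (by norm_num) hm0.le]
      congr 1
      rw [hPdef]
      rw [show u = (u-1)+1 by ring, Real.rpow_add hm0, Real.rpow_one]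
      ring_nf
    have hfinal : δ' * (2*(m:ℝ))^u = (ε * (c*P)) * (δ * m) := by
      rw [hmu, hδ'def]
      field_simp
    have hcomb := le_trans hkey (hSig.trans_eq hfinal)
    exact le_of_mul_le_mul_left hcomb (by positivity)
  -- Strong induction: linear growth of counting function
  have hind : ∀ δ : ℝ, 0 < δ → ∃ B : ℝ, 0 ≤ B ∧
      ∀ n : ℕ, (∑ k ∈ Finset.range n, I k) ≤ B + 2*δ*n := by
    intro δ hδ
    obtain ⟨N, hN1, hN⟩ := hblock δ hδ
    refine ⟨2*(N:ℝ)+3, by positivity, ?_⟩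
    intro n
    induction n using Nat.strong_induction_on with
    | _ n ih =>
      rcases lt_or_ge n (2*N+3) with hn | hn
      · have h1 : (∑ k ∈ Finset.range n, I k) ≤ n := by
          calc ∑ k ∈ Finset.range n, I k ≤ ∑ k ∈ Finset.range n, 1 :=
              Finset.sum_le_sum (fun k _ => hI1 k)
            _ = n := by simp
        have h2 : (n:ℝ) ≤ 2*(N:ℝ)+3 := by
          have : (n:ℝ) ≤ ((2*N+3 : ℕ):ℝ) := by exact_mod_cast hn.le
          push_cast at this; linarith
        nlinarith [Nat.cast_nonneg (α := ℝ) n]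
      · set m := (n+1)/2 with hm
        have hmN : N ≤ m := by omega
        have hmn : m < n := by omega
        have h2m : n ≤ 2*m := by omega
        have hsplit := Finset.sum_range_add_sum_Ico I (le_of_lt hmn)
        have hIco : (∑ i ∈ Finset.Ico m n, I i) ≤ δ * m := by
          calc ∑ i ∈ Finset.Ico m n, I i ≤ ∑ i ∈ Finset.Ico m (2*m), I i :=
              Finset.sum_le_sum_of_subset_of_nonneg
                (Finset.Ico_subset_Ico le_rfl h2m) (fun i _ _ => hI0 i)
            _ ≤ δ * m := hN m hmN
        have hih := ih m hmn
        have hcast : (m:ℝ) ≤ ((n:ℝ)+1)/2 := by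
          have h : ((m:ℕ):ℝ) ≤ ((n+1 : ℕ):ℝ) / ((2:ℕ):ℝ) := Nat.cast_div_le
          push_cast at h
          linarith
        have hn3 : (3:ℝ) ≤ n := by exact_mod_cast (by omega : 3 ≤ n)
        rw [← hsplit]
        nlinarith [mul_le_mul_of_nonneg_left hcast (by positivity : (0:ℝ) ≤ 3*δ),
          mul_le_mul_of_nonneg_left hn3 hδ.le]
  -- Conclude density zero
  show Tendsto (fun n : ℕ => (∑ k ∈ Finset.range n, I k) / n) atTop (nhds 0)
  rw [Metric.tendsto_atTop]
  intro ε₀ hε₀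
  obtain ⟨B, hB0, hB⟩ := hind (ε₀/4) (by positivity)
  obtain ⟨N₁, hN₁⟩ := exists_nat_gt (2*B/ε₀)
  refine ⟨N₁ + 1, fun n hn => ?_⟩
  have hn0 : (0:ℝ) < n := by exact_mod_cast (by omega : 0 < n)
  have hsum0 : 0 ≤ ∑ k ∈ Finset.range n, I k := Finset.sum_nonneg (fun k _ => hI0 k)
  rw [Real.dist_eq, sub_zero, abs_of_nonneg (by positivity)]
  rw [div_lt_iff₀ hn0]
  have hNn : ((N₁:ℝ)) < n := by exact_mod_cast (by omega : N₁ < n)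
  have h2 : 2*B < ε₀ * n := by
    have := (div_lt_iff₀ hε₀).mp (lt_trans hN₁ hNn)
    linarith
  have h3 := hB n
  linarith

private lemma diag_lemma (a : ℕ → ℝ) (ha : ∀ n, 0 ≤ a n)
    (hD : ∀ k : ℕ, HasDensityZero {n | 1/((k:ℝ)+1) ≤ a n}) :
    TendstoZeroDensityOne a := by
  set Ek : ℕ → Set ℕ := fun k => {n | 1/((k:ℝ)+1) ≤ a n} with hEk
  have hmono : ∀ j k : ℕ, j ≤ k → Ek j ⊆ Ek k := by
    intro j k hjk n hn
    have hj1 : (0:ℝ) < (j:ℝ)+1 := by positivity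
    have hc : ((j:ℝ)+1) ≤ (k:ℝ)+1 := by
      have : (j:ℝ) ≤ k := by exact_mod_cast hjk
      linarith
    have : 1/((k:ℝ)+1) ≤ 1/((j:ℝ)+1) := one_div_le_one_div_of_le hj1 hc
    exact le_trans this hn
  have hM : ∀ k : ℕ, ∃ M : ℕ, 1 ≤ M ∧ ∀ n, M ≤ n →
      (∑ i ∈ Finset.range n, Set.indicator (Ek k) (fun _ => (1:ℝ)) i) ≤
        n * (1/((k:ℝ)+1)) := by
    intro k
    have hev := (hD k).eventually_lt_const (show (0:ℝ) < 1/((k:ℝ)+1) by positivity)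
    obtain ⟨M₀, hM₀⟩ := eventually_atTop.mp hev
    refine ⟨max M₀ 1, le_max_right _ _, ?_⟩
    intro n hn
    have hn1 : 1 ≤ n := le_trans (le_max_right _ _) hn
    have hn0 : (0:ℝ) < n := by exact_mod_cast hn1
    have h := hM₀ n (le_trans (le_max_left _ _) hn)
    rw [div_lt_iff₀ hn0] at h
    nlinarith
  choose M hM1 hMp using hM
  set N : ℕ → ℕ := fun k => Nat.rec 0 (fun j Nj => max (M (j+1)) (Nj + 1)) k with hNdef
  have hNsucc : ∀ k, N (k+1) = max (M (k+1)) (N k + 1) := fun k => rfl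
  have hNmono : StrictMono N := strictMono_nat_of_lt_succ (fun k => by rw [hNsucc]; omega)
  have hNle : ∀ k, k ≤ N k := fun k => hNmono.le_apply
  have hP : ∀ k n, N k ≤ n →
      (∑ i ∈ Finset.range n, Set.indicator (Ek k) (fun _ => (1:ℝ)) i) ≤
        n * (1/((k:ℝ)+1)) := by
    intro k n hn
    cases k with
    | zero =>
      have h1 : (∑ i ∈ Finset.range n, Set.indicator (Ek 0) (fun _ => (1:ℝ)) i) ≤
          ∑ i ∈ Finset.range n, (1:ℝ) := by
        apply Finset.sum_le_sum
        intro i _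
        by_cases hi : i ∈ Ek 0 <;> simp [Set.indicator, hi]
      simp only [Finset.sum_const, Finset.card_range, nsmul_eq_mul, mul_one] at h1
      norm_num
      exact h1
    | succ j =>
      apply hMp (j+1) n
      rw [hNsucc] at hn
      omega
  set E : Set ℕ := ⋃ k, Ek k ∩ Set.Ico (N k) (N (k+1)) with hEdef
  set K : ℕ → ℕ := fun n => Nat.findGreatest (fun k => N k ≤ n) n with hKdef
  have hK1 : ∀ n, N (K n) ≤ n := by
    intro n
    have hN0 : N 0 = 0 := by rw [hNdef]; rfl
    show N (Nat.findGreatest (fun k => N k ≤ n) n) ≤ n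
    exact Nat.findGreatest_spec (P := fun k => N k ≤ n) (n := n) (m := 0)
      (Nat.zero_le n) (by show N 0 ≤ n; rw [hN0]; exact Nat.zero_le n)
  have hK2 : ∀ n, n < N (K n + 1) := by
    intro n
    by_contra hcon
    push_neg at hcon
    have hle : K n + 1 ≤ n := le_trans (hNle _) hcon
    exact (Nat.findGreatest_is_greatest (Nat.lt_succ_self _) hle) hcon
  have hK3 : ∀ k n, N k ≤ n → k ≤ K n :=
    fun k n hkn => Nat.le_findGreatest (le_trans (hNle k) hkn) hkn
  have hKtop : Tendsto K atTop atTop := by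
    rw [tendsto_atTop_atTop]
    exact fun b => ⟨N b, fun n hn => hK3 b n hn⟩
  have hEsub : ∀ n m : ℕ, m < n → m ∈ E → m ∈ Ek (K n) := by
    intro n m hmn hmE
    obtain ⟨s, hs⟩ := Set.mem_iUnion.mp hmE
    obtain ⟨hs1, hs2⟩ := hs
    have hsK : s ≤ K n := by
      by_contra hcon
      push_neg at hcon
      have h1 : N (K n + 1) ≤ N s := hNmono.monotone hcon
      have h2 := hs2.1
      have h3 := hK2 n
      omega
    exact hmono s (K n) hsK hs1
  have hdens : HasDensityZero E := by
    have hcnt : ∀ n : ℕ, (∑ i ∈ Finset.range n, Set.indicator E (fun _ => (1:ℝ)) i) ≤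
        n * (1/((K n:ℝ)+1)) := by
      intro n
      have hle : (∑ i ∈ Finset.range n, Set.indicator E (fun _ => (1:ℝ)) i) ≤
          ∑ i ∈ Finset.range n, Set.indicator (Ek (K n)) (fun _ => (1:ℝ)) i := by
        apply Finset.sum_le_sum
        intro i hi
        have hi' : i < n := Finset.mem_range.mp hi
        by_cases hiE : i ∈ E
        · have : i ∈ Ek (K n) := hEsub n i hi' hiE
          simp [Set.indicator, hiE, this]
        · simp [Set.indicator, hiE]
          by_cases h2 : i ∈ Ek (K n) <;> simp [h2]
      exact le_trans hle (hP (K n) n (hK1 n))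
    have hg : Tendsto (fun n : ℕ => 1/((K n:ℝ)+1)) atTop (nhds 0) :=
      tendsto_one_div_add_atTop_nhds_zero_nat.comp hKtop
    apply tendsto_of_tendsto_of_tendsto_of_le_of_le' tendsto_const_nhds hg
    · filter_upwards with n
      apply div_nonneg _ (Nat.cast_nonneg n)
      apply Finset.sum_nonneg
      intro i _
      exact Set.indicator_nonneg (fun _ _ => zero_le_one) i
    · filter_upwards [eventually_ge_atTop 1] with n hn
      have hn0 : (0:ℝ) < n := by exact_mod_cast hn
      rw [div_le_iff₀ hn0]
      calc (∑ i ∈ Finset.range n, Set.indicator E (fun _ => (1:ℝ)) i)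
          ≤ n * (1/((K n:ℝ)+1)) := hcnt n
        _ = 1/((K n:ℝ)+1) * n := by ring
  refine ⟨E, hdens, ?_⟩
  rw [Metric.tendsto_nhds]
  intro ε hε
  obtain ⟨k, hk⟩ := exists_nat_one_div_lt hε
  rw [eventually_inf_principal]
  filter_upwards [eventually_ge_atTop (N k)] with n hn hnE
  have hj : k ≤ K n := hK3 k n hn
  have h1 : N (K n) ≤ n := hK1 n
  have h2 : n < N (K n + 1) := hK2 n
  have hnot : n ∉ Ek (K n) := by
    intro hmem
    exact hnE (Set.mem_iUnion.mpr ⟨K n, ⟨hmem, ⟨h1, h2⟩⟩⟩)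
  have hlt : a n < 1/((K n:ℝ)+1) := lt_of_not_ge hnot
  have hmono2 : 1/((K n:ℝ)+1) ≤ 1/((k:ℝ)+1) := by
    apply one_div_le_one_div_of_le (by positivity)
    have : (k:ℝ) ≤ (K n : ℝ) := by exact_mod_cast hj
    linarith
  rw [Real.dist_eq, sub_zero, abs_of_nonneg (ha n)]
  linarith

theorem stmt_12 (u : ℝ) (hu : 0 < u) (a : ℕ → ℝ)
    (ha_nonneg : ∀ n, 0 ≤ a n) (A : ℝ) (ha_bdd : ∀ n, a n ≤ A)
    (h : ¬ TendstoZeroDensityOne a) :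
    0 < Filter.limsup (fun n : ℕ =>
        (n : ℝ) ^ (-u) * ∑ i ∈ Finset.Icc 1 (n - 1), a i * (i : ℝ) ^ (u - 1)) atTop := by
  by_contra h0
  push_neg at h0
  set S := fun n : ℕ => (n:ℝ)^(-u) * ∑ i ∈ Finset.Icc 1 (n-1), a i * (i:ℝ)^(u-1) with hSdef
  have hA0 : 0 ≤ A := le_trans (ha_nonneg 0) (ha_bdd 0)
  have hC0 : 0 ≤ A * max 1 (1/u) :=
    mul_nonneg hA0 (le_trans zero_le_one (le_max_left _ _))
  have hS0 : ∀ n, 0 ≤ S n := by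
    intro n
    apply mul_nonneg (Real.rpow_nonneg (Nat.cast_nonneg n) _)
    exact Finset.sum_nonneg fun i _ =>
      mul_nonneg (ha_nonneg i) (Real.rpow_nonneg (Nat.cast_nonneg i) _)
  have hSbd : ∀ n, S n ≤ A * max 1 (1/u) := by
    intro n
    rcases Nat.eq_zero_or_pos n with rfl | hn
    · have : S 0 = 0 := by
        rw [hSdef]
        simp [Real.zero_rpow (neg_ne_zero.mpr hu.ne')]
      rw [this]; exact hC0
    · have hn0 : (0:ℝ) < n := by exact_mod_cast hn
      have hsum1 : ∑ i ∈ Finset.Icc 1 (n-1), a i * (i:ℝ)^(u-1) ≤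
          A * ∑ i ∈ Finset.Icc 1 (n-1), (i:ℝ)^(u-1) := by
        rw [Finset.mul_sum]
        exact Finset.sum_le_sum fun i _ =>
          mul_le_mul_of_nonneg_right (ha_bdd i) (Real.rpow_nonneg (Nat.cast_nonneg i) _)
      have hsum2 := sum_rpow_bound hu (n-1)
      have hcast : (((n-1 : ℕ)):ℝ) + 1 = (n:ℝ) := by
        have h' : (n-1)+1 = n := by omega
        exact_mod_cast congrArg (Nat.cast (R := ℝ)) h'
      rw [hcast] at hsum2
      have hrw : (n:ℝ)^(-u) * (n:ℝ)^u = 1 := by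
        rw [← Real.rpow_add hn0]; norm_num
      calc S n ≤ (n:ℝ)^(-u) * (A * (max 1 (1/u) * (n:ℝ)^u)) := by
            apply mul_le_mul_of_nonneg_left _ (Real.rpow_nonneg hn0.le _)
            exact le_trans hsum1 (mul_le_mul_of_nonneg_left hsum2 hA0)
        _ = A * max 1 (1/u) * ((n:ℝ)^(-u) * (n:ℝ)^u) := by ring
        _ = A * max 1 (1/u) := by rw [hrw, mul_one]
  have hbdd : IsBoundedUnder (· ≤ ·) atTop S :=
    Filter.isBoundedUnder_of ⟨A * max 1 (1/u), hSbd⟩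
  have hev : ∀ δ : ℝ, 0 < δ → ∀ᶠ n in atTop, S n < δ := fun δ hδ =>
    Filter.eventually_lt_of_limsup_lt (lt_of_le_of_lt h0 hδ) hbdd
  have hS : Tendsto S atTop (nhds 0) := by
    rw [Metric.tendsto_atTop]
    intro δ hδ
    obtain ⟨N, hN⟩ := eventually_atTop.mp (hev δ hδ)
    exact ⟨N, fun n hn => by
      rw [Real.dist_eq, sub_zero, abs_of_nonneg (hS0 n)]; exact hN n hn⟩
  exact h (diag_lemma a ha_nonneg fun k =>
    density_zero_of_S_tendsto hu a ha_nonneg hS (by positivity))
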